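/- For p ∈ [1/6, 1/2), the ratio f'(x)/g_p'(x) is a decreasing function of x on (0, 1/2), where f(x) = h(x/2) + h((1-x)/2) - 1 and g_p(x) = h(x(1-p) + (1-x)p), with h the binary entropy function. -/

import Mathlib

open Set

noncomputable def binent (x : ℝ) : ℝ := -x * Real.logb 2 x - (1 - x) * Real.logb 2 (1 - x)

noncomputable def Nf (x : ℝ) : ℝ :=
  (Real.log (2 - x) + Real.log (1 - x) - Real.log x - Real.log (1 + x)) / (2 * Real.log 2)

noncomputable def Df (p x : ℝ) : ℝ :=
  (1 - 2 * p) * (Real.log (1 - (x * (1 - p) + (1 - x) * p)) -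
    Real.log (x * (1 - p) + (1 - x) * p)) / Real.log 2

noncomputable def Nd (x : ℝ) : ℝ :=
  (-(2 - x)⁻¹ - (1 - x)⁻¹ - x⁻¹ - (1 + x)⁻¹) / (2 * Real.log 2)

noncomputable def Dd (p x : ℝ) : ℝ :=
  (1 - 2 * p) ^ 2 * (-(1 - (x * (1 - p) + (1 - x) * p))⁻¹ -
    (x * (1 - p) + (1 - x) * p)⁻¹) / Real.log 2

lemma binent_eq :
    binent = fun x => (-(x * Real.log x) - (1 - x) * Real.log (1 - x)) / Real.log 2 := by
  funext x; simp [binent, Real.logb]; ring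

lemma binent_hasDerivAt {t : ℝ} (h0 : 0 < t) (h1 : t < 1) :
    HasDerivAt binent ((Real.log (1 - t) - Real.log t) / Real.log 2) t := by
  rw [binent_eq]
  have A : HasDerivAt (fun x : ℝ => x * Real.log x) (Real.log t + 1) t :=
    Real.hasDerivAt_mul_log h0.ne'
  have B : HasDerivAt (fun x : ℝ => 1 - x) (-1) t := (hasDerivAt_id t).const_sub 1
  have C : HasDerivAt (fun x : ℝ => (1 - x) * Real.log (1 - x))
      ((Real.log (1 - t) + 1) * (-1)) t :=
    (Real.hasDerivAt_mul_log (by linarith : (1:ℝ) - t ≠ 0)).comp t B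
  have := (A.neg.sub C).div_const (Real.log 2)
  refine this.congr_deriv ?_
  ring

lemma fN_hasDerivAt {x : ℝ} (h0 : 0 < x) (h1 : x < 1) :
    HasDerivAt (fun y => binent (y / 2) + binent ((1 - y) / 2) - 1) (Nf x) x := by
  have i1 : HasDerivAt (fun y : ℝ => y / 2) (1 / 2) x := by
    simpa using (hasDerivAt_id x).div_const 2
  have i2 : HasDerivAt (fun y : ℝ => (1 - y) / 2) (-1 / 2) x := by
    simpa using ((hasDerivAt_id x).const_sub 1).div_const 2
  have hb1 : HasDerivAt (fun y : ℝ => binent (y / 2))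
      ((Real.log (1 - x / 2) - Real.log (x / 2)) / Real.log 2 * (1 / 2)) x :=
    (binent_hasDerivAt (by linarith) (by linarith)).comp x i1
  have hb2 : HasDerivAt (fun y : ℝ => binent ((1 - y) / 2))
      ((Real.log (1 - (1 - x) / 2) - Real.log ((1 - x) / 2)) / Real.log 2 * (-1 / 2)) x :=
    (binent_hasDerivAt (by linarith) (by linarith)).comp x i2
  have := (hb1.add hb2).sub_const 1
  refine this.congr_deriv ?_
  have e1 : (1:ℝ) - x / 2 = (2 - x) / 2 := by ring
  have e2 : (1:ℝ) - (1 - x) / 2 = (1 + x) / 2 := by ring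
  rw [e1, e2, Real.log_div (by linarith) two_ne_zero, Real.log_div h0.ne' two_ne_zero,
    Real.log_div (by linarith) two_ne_zero, Real.log_div (by linarith) two_ne_zero, Nf]
  ring

lemma g_hasDerivAt {p x : ℝ} (h0 : 0 < x * (1 - p) + (1 - x) * p)
    (h1 : x * (1 - p) + (1 - x) * p < 1) :
    HasDerivAt (fun y => binent (y * (1 - p) + (1 - y) * p)) (Df p x) x := by
  have inner : HasDerivAt (fun y : ℝ => y * (1 - p) + (1 - y) * p) (1 - 2 * p) x := by
    have := ((hasDerivAt_id x).mul_const (1 - p)).add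
      (((hasDerivAt_id x).const_sub 1).mul_const p)
    refine this.congr_deriv ?_
    ring
  have := (binent_hasDerivAt h0 h1).comp x inner
  refine this.congr_deriv ?_
  rw [Df]; ring

lemma Nf_hasDerivAt {x : ℝ} (h0 : 0 < x) (h1 : x < 1) : HasDerivAt Nf (Nd x) x := by
  have l1 : HasDerivAt (fun y : ℝ => Real.log (2 - y)) (-(2 - x)⁻¹) x := by
    have := (Real.hasDerivAt_log (by linarith : (2:ℝ) - x ≠ 0)).comp x
      ((hasDerivAt_id x).const_sub 2)
    refine this.congr_deriv ?_; ring
  have l2 : HasDerivAt (fun y : ℝ => Real.log (1 - y)) (-(1 - x)⁻¹) x := by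
    have := (Real.hasDerivAt_log (by linarith : (1:ℝ) - x ≠ 0)).comp x
      ((hasDerivAt_id x).const_sub 1)
    refine this.congr_deriv ?_; ring
  have l3 : HasDerivAt (fun y : ℝ => Real.log y) (x⁻¹) x := Real.hasDerivAt_log h0.ne'
  have l4 : HasDerivAt (fun y : ℝ => Real.log (1 + y)) ((1 + x)⁻¹) x := by
    have := (Real.hasDerivAt_log (by linarith : (1:ℝ) + x ≠ 0)).comp x
      ((hasDerivAt_id x).const_add 1)
    refine this.congr_deriv ?_; ring
  have := (((l1.add l2).sub l3).sub l4).div_const (2 * Real.log 2)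
  have e : HasDerivAt Nf ((-(2 - x)⁻¹ + -(1 - x)⁻¹ - x⁻¹ - (1 + x)⁻¹) / (2 * Real.log 2)) x :=
    this
  exact e.congr_deriv (by rw [Nd]; ring)

lemma Df_hasDerivAt {p x : ℝ} (h0 : 0 < x * (1 - p) + (1 - x) * p)
    (h1 : x * (1 - p) + (1 - x) * p < 1) : HasDerivAt (Df p) (Dd p x) x := by
  have inner : HasDerivAt (fun y : ℝ => y * (1 - p) + (1 - y) * p) (1 - 2 * p) x := by
    have := ((hasDerivAt_id x).mul_const (1 - p)).add
      (((hasDerivAt_id x).const_sub 1).mul_const p)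
    refine this.congr_deriv ?_
    ring
  have lu1 : HasDerivAt (fun y : ℝ => Real.log (1 - (y * (1 - p) + (1 - y) * p)))
      ((1 - (x * (1 - p) + (1 - x) * p))⁻¹ * (-(1 - 2 * p))) x :=
    (Real.hasDerivAt_log (by linarith)).comp x (inner.const_sub 1)
  have lu2 : HasDerivAt (fun y : ℝ => Real.log (y * (1 - p) + (1 - y) * p))
      ((x * (1 - p) + (1 - x) * p)⁻¹ * (1 - 2 * p)) x :=
    by have := (Real.hasDerivAt_log h0.ne').comp x inner; exact this
  have := ((lu1.sub lu2).const_mul (1 - 2 * p)).div_const (Real.log 2)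
  have e : HasDerivAt (fun y : ℝ => (1 - 2 * p) * (Real.log (1 - (y * (1 - p) + (1 - y) * p)) -
      Real.log (y * (1 - p) + (1 - y) * p)) / Real.log 2)
      ((1 - 2 * p) * ((1 - (x * (1 - p) + (1 - x) * p))⁻¹ * (-(1 - 2 * p)) -
        (x * (1 - p) + (1 - x) * p)⁻¹ * (1 - 2 * p)) / Real.log 2) x := this
  have e2 : HasDerivAt (Df p) ((1 - 2 * p) * ((1 - (x * (1 - p) + (1 - x) * p))⁻¹ * (-(1 - 2 * p)) -
      (x * (1 - p) + (1 - x) * p)⁻¹ * (1 - 2 * p)) / Real.log 2) x := e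
  convert e2 using 1
  simp only [Dd]; ring

lemma Nf_half : Nf (1/2) = 0 := by
  rw [Nf]; norm_num

lemma Df_half (p : ℝ) : Df p (1/2) = 0 := by
  rw [Df]
  have h : (1/2 : ℝ) * (1 - p) + (1 - 1/2) * p = 1/2 := by ring
  rw [h]
  norm_num

lemma Df_pos {p x : ℝ} (hp1 : 1/6 ≤ p) (hp2 : p < 1/2) (h0 : 0 < x) (h1 : x < 1/2) :
    0 < Df p x := by
  have hL : 0 < Real.log 2 := Real.log_pos one_lt_two
  have hu0 : 0 < x * (1 - p) + (1 - x) * p := by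
    nlinarith [mul_pos h0 (by linarith : (0:ℝ) < 1 - p),
      mul_nonneg (by linarith : (0:ℝ) ≤ 1 - x) (by linarith : (0:ℝ) ≤ p)]
  have hu2 : x * (1 - p) + (1 - x) * p < 1/2 := by
    nlinarith [mul_pos (by linarith : (0:ℝ) < 1 - 2*p) (by linarith : (0:ℝ) < 1/2 - x)]
  have hlog : Real.log (x * (1 - p) + (1 - x) * p) <
      Real.log (1 - (x * (1 - p) + (1 - x) * p)) :=
    Real.log_lt_log hu0 (by linarith)
  rw [Df]
  apply div_pos _ hL
  apply mul_pos (by linarith) (by linarith)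

lemma Dd_neg {p x : ℝ} (hp2 : p < 1/2) (hu0 : 0 < x * (1 - p) + (1 - x) * p)
    (hu1 : x * (1 - p) + (1 - x) * p < 1) : Dd p x < 0 := by
  have hL : 0 < Real.log 2 := Real.log_pos one_lt_two
  rw [Dd]
  apply div_neg_of_neg_of_pos _ hL
  apply mul_neg_of_pos_of_neg (pow_pos (by linarith) 2)
  have i1 : 0 < (1 - (x * (1 - p) + (1 - x) * p))⁻¹ := by
    apply inv_pos.2; linarith
  have i2 : 0 < (x * (1 - p) + (1 - x) * p)⁻¹ := inv_pos.2 hu0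
  linarith

lemma NdEq {x : ℝ} (h0 : 0 < x) (h1 : x < 1) :
    Nd x = -((1 + 2*(x*(1-x))) / ((x*(1-x)) * (2 + x*(1-x)) * Real.log 2)) := by
  have hL : Real.log 2 ≠ 0 := (Real.log_pos one_lt_two).ne'
  have n1 : (2:ℝ) - x ≠ 0 := by linarith
  have n2 : (1:ℝ) - x ≠ 0 := by linarith
  have n3 : x ≠ 0 := h0.ne'
  have n4 : (1:ℝ) + x ≠ 0 := by linarith
  have n5 : x*(1-x) ≠ 0 := mul_ne_zero n3 n2
  have n6 : (2:ℝ) + x*(1-x) ≠ 0 := by nlinarith [mul_pos h0 (by linarith : (0:ℝ) < 1 - x)]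
  rw [Nd]
  field_simp
  ring

lemma DdEq {p x : ℝ} (hu0 : 0 < x * (1 - p) + (1 - x) * p)
    (hu1 : x * (1 - p) + (1 - x) * p < 1) :
    Dd p x = -((1 - 2*p)^2 /
      ((p*(1-p) + (1-2*p)^2 * (x*(1-x))) * Real.log 2)) := by
  have hL : Real.log 2 ≠ 0 := (Real.log_pos one_lt_two).ne'
  have n9 : x*(1-p)+(1-x)*p ≠ 0 := hu0.ne'
  have n10 : 1 - (x*(1-p)+(1-x)*p) ≠ 0 := by linarith
  have hUeq : p*(1-p) + (1-2*p)^2 * (x*(1-x)) =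
      (x*(1-p)+(1-x)*p) * (1 - (x*(1-p)+(1-x)*p)) := by ring
  have nU : p*(1-p) + (1-2*p)^2 * (x*(1-x)) ≠ 0 := by
    rw [hUeq]; exact mul_ne_zero n9 n10
  rw [Dd]
  rw [hUeq]
  generalize x*(1-p)+(1-x)*p = u at n9 n10 ⊢
  field_simp
  ring

lemma keyH {p s1 s2 : ℝ} (hp1 : 1/6 ≤ p) (hp2 : p < 1/2) (hs1 : 0 ≤ s1) (h12 : s1 ≤ s2)
    (hs2 : s2 ≤ 1/4) :
    0 ≤ 2*(p*(1-p)) + (p*(1-p))*(s1+s2) + (2*(p*(1-p)) - 3*(1-2*p)^2)*(s1*s2) := by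
  have hm : 0 ≤ p*(1-p) := by nlinarith
  have h34 : 0 ≤ 34*(p*(1-p)) - 3*(1-2*p)^2 := by
    nlinarith [mul_nonneg (by linarith : (0:ℝ) ≤ p - 1/6) (by linarith : (0:ℝ) ≤ 1/2 - p)]
  have ht0 : 0 ≤ s1*s2 := mul_nonneg hs1 (le_trans hs1 h12)
  have ht1 : s1*s2 ≤ 1/16 := by nlinarith
  nlinarith [mul_nonneg hm (by linarith : (0:ℝ) ≤ 1 - 16*(s1*s2)),
    mul_nonneg h34 ht0, mul_nonneg hm (by linarith : (0:ℝ) ≤ s1 + s2)]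

lemma ratio_step {p L s1 s2 : ℝ} (hL : 0 < L) (hp1 : 1/6 ≤ p) (hp2 : p < 1/2)
    (hs1 : 0 < s1) (h12 : s1 ≤ s2) (hs2 : s2 ≤ 1/4)
    (hU1 : 0 < p*(1-p) + (1-2*p)^2 * s1) (hU2 : 0 < p*(1-p) + (1-2*p)^2 * s2) :
    -((1 + 2*s2) / (s2 * (2 + s2) * L)) * -((1-2*p)^2 / ((p*(1-p) + (1-2*p)^2 * s1) * L)) ≤
    -((1 + 2*s1) / (s1 * (2 + s1) * L)) * -((1-2*p)^2 / ((p*(1-p) + (1-2*p)^2 * s2) * L)) := by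
  have hs2pos : 0 < s2 := lt_of_lt_of_le hs1 h12
  have hq0 : 0 < (1-2*p)^2 := pow_pos (by linarith) 2
  have hd1 : 0 < s1 * (2 + s1) * L := mul_pos (mul_pos hs1 (by linarith)) hL
  have hd2 : 0 < s2 * (2 + s2) * L := mul_pos (mul_pos hs2pos (by linarith)) hL
  rw [neg_mul_neg, neg_mul_neg, div_mul_div_comm, div_mul_div_comm,
    div_le_div_iff₀ (mul_pos hd2 (mul_pos hU1 hL)) (mul_pos hd1 (mul_pos hU2 hL))]
  have hH := keyH hp1 hp2 hs1.le h12 hs2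
  have hfac : (1 + 2*s1) * (1-2*p)^2 * (s2 * (2 + s2) * L * ((p*(1-p) + (1-2*p)^2*s1) * L)) -
      (1 + 2*s2) * (1-2*p)^2 * (s1 * (2 + s1) * L * ((p*(1-p) + (1-2*p)^2*s2) * L)) =
      (1-2*p)^2 * L^2 * ((s2 - s1) *
        (2*(p*(1-p)) + (p*(1-p))*(s1+s2) + (2*(p*(1-p)) - 3*(1-2*p)^2)*(s1*s2))) := by
    ring
  nlinarith [mul_nonneg (mul_nonneg hq0.le (sq_nonneg L))
    (mul_nonneg (by linarith : (0:ℝ) ≤ s2 - s1) hH), hfac]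

lemma keyK {p x c : ℝ} (hp1 : 1/6 ≤ p) (hp2 : p < 1/2) (hx : 0 < x) (hxc : x ≤ c)
    (hc : c < 1/2) : Nd c * Dd p x ≤ Nd x * Dd p c := by
  have hL : 0 < Real.log 2 := Real.log_pos one_lt_two
  have hx2 : x < 1/2 := lt_of_le_of_lt hxc hc
  have hc0 : 0 < c := lt_of_lt_of_le hx hxc
  have hu : ∀ z : ℝ, 0 < z → z < 1/2 →
      0 < z * (1 - p) + (1 - z) * p ∧ z * (1 - p) + (1 - z) * p < 1/2 := by
    intro z hz0 hz1
    constructor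
    · nlinarith [mul_pos hz0 (by linarith : (0:ℝ) < 1 - p),
        mul_nonneg (by linarith : (0:ℝ) ≤ 1 - z) (by linarith : (0:ℝ) ≤ p)]
    · nlinarith [mul_pos (by linarith : (0:ℝ) < 1 - 2*p) (by linarith : (0:ℝ) < 1/2 - z)]
  obtain ⟨hu10, hu12⟩ := hu x hx hx2
  obtain ⟨hu20, hu22⟩ := hu c hc0 hc
  have hU1 : 0 < p*(1-p) + (1-2*p)^2 * (x*(1-x)) := by
    have e : p*(1-p) + (1-2*p)^2 * (x*(1-x)) =
        (x*(1-p)+(1-x)*p) * (1 - (x*(1-p)+(1-x)*p)) := by ring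
    rw [e]; exact mul_pos hu10 (by linarith)
  have hU2 : 0 < p*(1-p) + (1-2*p)^2 * (c*(1-c)) := by
    have e : p*(1-p) + (1-2*p)^2 * (c*(1-c)) =
        (c*(1-p)+(1-c)*p) * (1 - (c*(1-p)+(1-c)*p)) := by ring
    rw [e]; exact mul_pos hu20 (by linarith)
  rw [NdEq hx (by linarith), NdEq hc0 (by linarith),
    DdEq hu10 (by linarith), DdEq hu20 (by linarith)]
  exact ratio_step hL hp1 hp2 (mul_pos hx (by linarith))
    (by nlinarith [mul_nonneg (by linarith : (0:ℝ) ≤ c - x) (by linarith : (0:ℝ) ≤ 1 - x - c)])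
    (by nlinarith [sq_nonneg (1 - 2*c)]) hU1 hU2

theorem stmt_14 (p : ℝ) (hp : p ∈ Ico (1 / 6 : ℝ) (1 / 2)) :
    AntitoneOn
      (fun x => deriv (fun y => binent (y / 2) + binent ((1 - y) / 2) - 1) x /
        deriv (fun y => binent (y * (1 - p) + (1 - y) * p)) x)
      (Ioo (0 : ℝ) (1 / 2)) := by
  obtain ⟨hp1, hp2⟩ := hp
  have hu : ∀ z : ℝ, 0 < z → z ≤ 1/2 →
      0 < z * (1 - p) + (1 - z) * p ∧ z * (1 - p) + (1 - z) * p ≤ 1/2 := by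
    intro z hz0 hz1
    constructor
    · nlinarith [mul_pos hz0 (by linarith : (0:ℝ) < 1 - p),
        mul_nonneg (by linarith : (0:ℝ) ≤ 1 - z) (by linarith : (0:ℝ) ≤ p)]
    · nlinarith [mul_nonneg (by linarith : (0:ℝ) ≤ 1 - 2*p) (by linarith : (0:ℝ) ≤ 1/2 - z)]
  -- the ratio of explicit derivatives
  have hRdiff : ∀ y ∈ Ioo (0:ℝ) (1/2), HasDerivAt (fun x => Nf x / Df p x)
      ((Nd y * Df p y - Nf y * Dd p y) / Df p y ^ 2) y := by
    intro y hy
    obtain ⟨hy0, hy2⟩ := hy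
    obtain ⟨hu0, hu2⟩ := hu y hy0 hy2.le
    exact (Nf_hasDerivAt hy0 (by linarith)).div
      (Df_hasDerivAt hu0 (by linarith)) (Df_pos hp1 hp2 hy0 hy2).ne'
  have hR : AntitoneOn (fun x => Nf x / Df p x) (Ioo (0:ℝ) (1/2)) := by
    apply antitoneOn_of_deriv_nonpos (convex_Ioo _ _)
    · intro y hy
      exact (hRdiff y hy).continuousAt.continuousWithinAt
    · rw [interior_Ioo]
      intro y hy
      exact (hRdiff y hy).differentiableAt.differentiableWithinAt
    · rw [interior_Ioo]
      intro y hy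
      rw [(hRdiff y hy).deriv]
      obtain ⟨hy0, hy2⟩ := hy
      have hDfy : 0 < Df p y := Df_pos hp1 hp2 hy0 hy2
      -- Cauchy MVT on [y, 1/2]
      have hcontN : ContinuousOn Nf (Icc y (1/2)) := by
        intro z hz
        exact (Nf_hasDerivAt (lt_of_lt_of_le hy0 hz.1) (by linarith [hz.2])).continuousAt.continuousWithinAt
      have hcontD : ContinuousOn (Df p) (Icc y (1/2)) := by
        intro z hz
        obtain ⟨hz0, hz2⟩ := hu z (lt_of_lt_of_le hy0 hz.1) hz.2
        exact (Df_hasDerivAt hz0 (by linarith)).continuousAt.continuousWithinAt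
      have hderN : ∀ z ∈ Ioo y (1/2), HasDerivAt Nf (Nd z) z := by
        intro z hz
        exact Nf_hasDerivAt (lt_trans hy0 hz.1) (by linarith [hz.2])
      have hderD : ∀ z ∈ Ioo y (1/2), HasDerivAt (Df p) (Dd p z) z := by
        intro z hz
        obtain ⟨hz0, hz2⟩ := hu z (lt_trans hy0 hz.1) hz.2.le
        exact Df_hasDerivAt hz0 (by linarith)
      obtain ⟨c, hcmem, hc⟩ := exists_ratio_hasDerivAt_eq_ratio_slope Nf Nd hy2 hcontN hderN
        (Df p) (Dd p) hcontD hderD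
      rw [Df_half, Nf_half] at hc
      -- hc : (0 - Df p y) * Nd c = (0 - Nf y) * Dd p c
      have e1 : Df p y * Nd c = Nf y * Dd p c := by linear_combination -hc
      have hK : Nd c * Dd p y ≤ Nd y * Dd p c :=
        keyK hp1 hp2 hy0 hcmem.1.le hcmem.2
      obtain ⟨huc0, huc2⟩ := hu c (lt_trans hy0 hcmem.1) hcmem.2.le
      have hDdc : Dd p c < 0 := Dd_neg hp2 huc0 (by linarith)
      have e2 : (Nd y * Df p y - Nf y * Dd p y) * Dd p c =
          Df p y * (Nd y * Dd p c - Nd c * Dd p y) := by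
        linear_combination (Dd p y) * e1
      have e3 : 0 ≤ Df p y * (Nd y * Dd p c - Nd c * Dd p y) :=
        mul_nonneg hDfy.le (by linarith)
      have hA : Nd y * Df p y - Nf y * Dd p y ≤ 0 := by nlinarith [e2, e3, hDdc]
      exact div_nonpos_of_nonpos_of_nonneg hA (sq_nonneg _)
  -- transfer to the stated function
  intro a ha b hb hab
  have key : ∀ z ∈ Ioo (0:ℝ) (1/2),
      (fun x => deriv (fun y => binent (y / 2) + binent ((1 - y) / 2) - 1) x /
        deriv (fun y => binent (y * (1 - p) + (1 - y) * p)) x) z = Nf z / Df p z := by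
    intro z hz
    obtain ⟨hz0, hz2⟩ := hz
    obtain ⟨hu0, hu2⟩ := hu z hz0 hz2.le
    simp only
    rw [(fN_hasDerivAt hz0 (by linarith)).deriv,
      (g_hasDerivAt hu0 (by linarith : z * (1 - p) + (1 - z) * p < 1)).deriv]
  rw [key a ha, key b hb]
  exact hR ha hb hab
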